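/- For every binary word w, the maximum hexagonal-lattice fold score satisfies J_hex(w) ≤ Z(w)/2 + 1, i.e., 2·J_hex(w) ≤ Z(w) + 2, where Z(w) is the number of zeros in w. -/
import Mathlib


/-- L¹ distance on ℤ². -/
def d2 (p q : ℤ × ℤ) : ℕ := (p.1 - q.1).natAbs + (p.2 - q.2).natAbs

/-- Adjacency in the 2D rectangular lattice. -/
def adj2 (p q : ℤ × ℤ) : Prop := d2 p q = 1

/-- Adjacency in the hexagonal (3-regular, brick-wall) lattice. -/
def hexAdj (p q : ℤ × ℤ) : Prop :=
  (p.2 = q.2 ∧ (p.1 - q.1).natAbs = 1) ∨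
  (p.1 = q.1 ∧ ((q.2 = p.2 + 1 ∧ (p.1 + p.2) % 2 = 0) ∨ (p.2 = q.2 + 1 ∧ (q.1 + q.2) % 2 = 0)))

/-- A fold (self-avoiding walk) of a binary word `w` on a lattice with adjacency `A`:
letters `false` = hydrophobic (0), `true` = polar (1). -/
def IsFold (A : ℤ × ℤ → ℤ × ℤ → Prop) (w : List Bool) (F : Fin w.length → ℤ × ℤ) : Prop :=
  Function.Injective F ∧
    ∀ (i : ℕ) (h : i + 1 < w.length), A (F ⟨i, by omega⟩) (F ⟨i + 1, h⟩)

/-- The score of a fold: the number of (unordered) pairs of non-consecutive positions,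
both labeled 0, whose images are adjacent. -/
noncomputable def score (A : ℤ × ℤ → ℤ × ℤ → Prop) (w : List Bool) (F : Fin w.length → ℤ × ℤ) : ℕ :=
  Set.ncard {p : Fin w.length × Fin w.length |
    p.1.1 + 2 ≤ p.2.1 ∧ w.get p.1 = false ∧ w.get p.2 = false ∧ A (F p.1) (F p.2)}

/-- The optimal score over all folds of `w`. -/
noncomputable def J (A : ℤ × ℤ → ℤ × ℤ → Prop) (w : List Bool) : ℕ :=
  sSup {s | ∃ F, IsFold A w F ∧ score A w F = s}


def nbrs (p : ℤ × ℤ) : Finset (ℤ × ℤ) :=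
  {(p.1 - 1, p.2), (p.1 + 1, p.2), if (p.1 + p.2) % 2 = 0 then (p.1, p.2 + 1) else (p.1, p.2 - 1)}

lemma card_nbrs (p : ℤ × ℤ) : (nbrs p).card ≤ 3 := by
  refine (Finset.card_insert_le _ _).trans (Nat.succ_le_succ ?_)
  refine (Finset.card_insert_le _ _).trans (Nat.succ_le_succ ?_)
  simp

lemma mem_nbrs {p q : ℤ × ℤ} (h : hexAdj p q) : q ∈ nbrs p := by
  rcases h with ⟨h2, h1⟩ | ⟨h1, ⟨h2, h3⟩ | ⟨h2, h3⟩⟩ <;>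
    simp only [nbrs, Finset.mem_insert, Finset.mem_singleton, Prod.ext_iff] <;>
    split <;> omega

lemma hexAdj_symm {p q : ℤ × ℤ} (h : hexAdj p q) : hexAdj q p := by
  rcases h with ⟨h2, h1⟩ | ⟨h1, h | h⟩
  · exact Or.inl ⟨h2.symm, by omega⟩
  · exact Or.inr ⟨h1.symm, Or.inr h⟩
  · exact Or.inr ⟨h1.symm, Or.inl h⟩

lemma count_false_card (w : List Bool) :
    (Finset.univ.filter (fun i : Fin w.length => w.get i = false)).card = w.count false := by
  induction w with
  | nil => simp
  | cons a t ih =>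
    rw [Finset.card_filter] at ih ⊢
    show (∑ i : Fin (t.length + 1), if (a :: t).get i = false then 1 else 0)
        = List.count false (a :: t)
    rw [Fin.sum_univ_succ]
    have e : (∑ i : Fin t.length, if (a :: t).get i.succ = false then 1 else 0)
        = List.count false t := ih
    rw [e, List.count_cons]
    by_cases h : a = false <;> simp [h] <;> omega

lemma core (w : List Bool) (F : Fin w.length → ℤ × ℤ) (hF : IsFold hexAdj w F) :
    2 * score hexAdj w F ≤ w.count false + 2 := by
  classical
  obtain ⟨hinj, hadj⟩ := hF
  set P : Fin w.length × Fin w.length → Prop := fun p =>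
    p.1.1 + 2 ≤ p.2.1 ∧ w.get p.1 = false ∧ w.get p.2 = false ∧ hexAdj (F p.1) (F p.2) with hP
  have hscore : score hexAdj w F = (Finset.univ.filter P).card := by
    rw [score, ← Set.ncard_coe_finset]
    congr 1
    ext p
    simp [hP]
  set S := Finset.univ.filter P with hS
  by_cases hn3 : 3 ≤ w.length
  swap
  · have hS0 : S = ∅ := Finset.eq_empty_of_forall_notMem (fun p hp => by
      have h := (Finset.mem_filter.mp hp).2.1
      have := p.2.isLt
      omega)
    rw [hscore, hS0]
    simp
  set T := Finset.univ.filter (fun p => P p ∨ P (Prod.swap p)) with hT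
  have hTcard : T.card = 2 * S.card := by
    have hdisj : Disjoint S (S.image Prod.swap) := by
      rw [Finset.disjoint_left]
      rintro p hp hq
      simp only [Finset.mem_image] at hq
      obtain ⟨q, hq, rfl⟩ := hq
      have h1 := (Finset.mem_filter.mp hp).2.1
      have h2 := (Finset.mem_filter.mp hq).2.1
      simp only [Prod.fst_swap, Prod.snd_swap] at h1
      omega
    have hunion : T = S ∪ S.image Prod.swap := by
      ext p
      simp only [hT, hS, Finset.mem_filter, Finset.mem_union, Finset.mem_image,
        Finset.mem_univ, true_and]
      constructor
      · rintro (h | h)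
        · exact Or.inl h
        · exact Or.inr ⟨p.swap, h, Prod.swap_swap p⟩
      · rintro (h | ⟨q, hq, rfl⟩)
        · exact Or.inl h
        · exact Or.inr (by simpa using hq)
    rw [hunion, Finset.card_union_of_disjoint hdisj,
      Finset.card_image_of_injective _ Prod.swap_injective]
    ring
  have key : ∀ i : Fin w.length, (T.filter fun p => p.1 = i).card ≤
      (if w.get i = false then (if i.1 = 0 ∨ i.1 = w.length - 1 then 2 else 1) else 0) := by
    intro i
    by_cases hgi : w.get i = false
    swap
    · rw [if_neg hgi, Nat.le_zero, Finset.card_eq_zero]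
      apply Finset.eq_empty_of_forall_notMem
      rintro p hp
      obtain ⟨hpT, hpi⟩ := Finset.mem_filter.mp hp
      obtain ⟨-, h⟩ := Finset.mem_filter.mp hpT
      rcases h with h | h
      · exact hgi (hpi ▸ h.2.1)
      · exact hgi (hpi ▸ h.2.2.1)
    rw [if_pos hgi]
    set Fi := T.filter (fun p => p.1 = i) with hFi
    have hmem : ∀ p ∈ Fi, hexAdj (F i) (F p.2) ∧ (i.1 + 2 ≤ p.2.1 ∨ p.2.1 + 2 ≤ i.1) := by
      intro p hp
      obtain ⟨hpT, hpi⟩ := Finset.mem_filter.mp hp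
      obtain ⟨-, h⟩ := Finset.mem_filter.mp hpT
      rw [← hpi]
      rcases h with ⟨hgap, -, -, hadj'⟩ | ⟨hgap, -, -, hadj'⟩
      · exact ⟨hadj', Or.inl hgap⟩
      · exact ⟨hexAdj_symm hadj', Or.inr hgap⟩
    have himg : Fi.card = (Fi.image (fun p => F p.2)).card := by
      rw [Finset.card_image_of_injOn]
      intro p hp q hq hpq
      have hp1 := (Finset.mem_filter.mp hp).2
      have hq1 := (Finset.mem_filter.mp hq).2
      exact Prod.ext_iff.mpr ⟨hp1.trans hq1.symm, hinj hpq⟩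
    have hsub : ∀ M : Finset (ℤ × ℤ), M ⊆ nbrs (F i) →
        (∀ p ∈ Fi, F p.2 ∉ M) → Fi.card ≤ 3 - M.card := by
      intro M hM hnot
      rw [himg]
      calc (Fi.image (fun p => F p.2)).card ≤ (nbrs (F i) \ M).card := by
            apply Finset.card_le_card
            intro x hx
            obtain ⟨p, hp, rfl⟩ := Finset.mem_image.mp hx
            exact Finset.mem_sdiff.mpr ⟨mem_nbrs (hmem p hp).1, hnot p hp⟩
        _ = (nbrs (F i)).card - M.card := Finset.card_sdiff_of_subset hM
        _ ≤ 3 - M.card := Nat.sub_le_sub_right (card_nbrs _) _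
    have hup : ∀ h1 : i.1 + 1 < w.length, hexAdj (F i) (F ⟨i.1 + 1, h1⟩) := fun h1 => hadj i.1 h1
    have hdown : ∀ h1 : 1 ≤ i.1, hexAdj (F i) (F ⟨i.1 - 1, by omega⟩) := by
      intro h1
      have h2 : i.1 - 1 + 1 < w.length := by have := i.isLt; omega
      have h3 := hadj (i.1 - 1) h2
      have e : (⟨i.1 - 1 + 1, h2⟩ : Fin w.length) = i := Fin.ext (show i.1 - 1 + 1 = i.1 by omega)
      rw [e] at h3
      exact hexAdj_symm h3
    by_cases hend : i.1 = 0 ∨ i.1 = w.length - 1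
    · rw [if_pos hend]
      by_cases hlt : i.1 + 1 < w.length
      · have h := hsub {F ⟨i.1 + 1, hlt⟩} ?_ ?_
        · simpa using h
        · intro x hx
          rw [Finset.mem_singleton] at hx
          subst hx
          exact mem_nbrs (hup hlt)
        · intro p hp h
          rw [Finset.mem_singleton] at h
          have hv : p.2.1 = i.1 + 1 := congrArg Fin.val (hinj h)
          have hg := (hmem p hp).2
          omega
      · have h1 : 1 ≤ i.1 := by have := i.isLt; omega
        have h := hsub {F ⟨i.1 - 1, by have := i.isLt; omega⟩} ?_ ?_
        · simpa using h
        · intro x hx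
          rw [Finset.mem_singleton] at hx
          subst hx
          exact mem_nbrs (hdown h1)
        · intro p hp h
          rw [Finset.mem_singleton] at h
          have hv : p.2.1 = i.1 - 1 := congrArg Fin.val (hinj h)
          have hg := (hmem p hp).2
          omega
    · rw [if_neg hend]
      push_neg at hend
      have h1 : 1 ≤ i.1 := by omega
      have hlt : i.1 + 1 < w.length := by have := i.isLt; omega
      have hne : F ⟨i.1 - 1, by have := i.isLt; omega⟩ ≠ F ⟨i.1 + 1, hlt⟩ := by
        intro h
        have h2 : i.1 - 1 = i.1 + 1 := congrArg Fin.val (hinj h)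
        omega
      have h := hsub {F ⟨i.1 - 1, by have := i.isLt; omega⟩, F ⟨i.1 + 1, hlt⟩} ?_ ?_
      · rwa [Finset.card_pair hne] at h
      · intro x hx
        rcases Finset.mem_insert.mp hx with hx | hx
        · subst hx; exact mem_nbrs (hdown h1)
        · rw [Finset.mem_singleton] at hx; subst hx; exact mem_nbrs (hup hlt)
      · intro p hp h
        have hg := (hmem p hp).2
        rcases Finset.mem_insert.mp h with h | h
        · have hv : p.2.1 = i.1 - 1 := congrArg Fin.val (hinj h)
          omega
        · rw [Finset.mem_singleton] at h
          have hv : p.2.1 = i.1 + 1 := congrArg Fin.val (hinj h)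
          omega
  have hfib : T.card = ∑ i : Fin w.length, (T.filter fun p => p.1 = i).card :=
    Finset.card_eq_sum_card_fiberwise (fun x _ => Finset.mem_univ x.1)
  have hsplit : ∀ i : Fin w.length,
      (if w.get i = false then (if i.1 = 0 ∨ i.1 = w.length - 1 then 2 else 1) else 0)
      = (if w.get i = false then 1 else 0)
        + (if w.get i = false ∧ (i.1 = 0 ∨ i.1 = w.length - 1) then 1 else 0) := by
    intro i
    split_ifs <;> simp_all
  have hend2 : (Finset.univ.filter
      (fun i : Fin w.length => w.get i = false ∧ (i.1 = 0 ∨ i.1 = w.length - 1))).card ≤ 2 := by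
    have hsub2 : Finset.univ.filter
        (fun i : Fin w.length => w.get i = false ∧ (i.1 = 0 ∨ i.1 = w.length - 1))
        ⊆ {(⟨0, by omega⟩ : Fin w.length), ⟨w.length - 1, by omega⟩} := by
      intro x hx
      obtain ⟨-, h⟩ := (Finset.mem_filter.mp hx).2
      simp only [Finset.mem_insert, Finset.mem_singleton]
      rcases h with h | h
      · exact Or.inl (Fin.ext h)
      · exact Or.inr (Fin.ext h)
    exact (Finset.card_le_card hsub2).trans ((Finset.card_insert_le _ _).trans (by simp))
  calc 2 * score hexAdj w F = T.card := by rw [hscore, hTcard]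
    _ = ∑ i : Fin w.length, (T.filter fun p => p.1 = i).card := hfib
    _ ≤ ∑ i : Fin w.length, (if w.get i = false then (if i.1 = 0 ∨ i.1 = w.length - 1 then 2 else 1) else 0) :=
        Finset.sum_le_sum (fun i _ => key i)
    _ = (∑ i : Fin w.length, if w.get i = false then 1 else 0)
        + ∑ i : Fin w.length, (if w.get i = false ∧ (i.1 = 0 ∨ i.1 = w.length - 1) then 1 else 0) := by
        rw [← Finset.sum_add_distrib]
        exact Finset.sum_congr rfl (fun i _ => hsplit i)
    _ ≤ w.count false + 2 := by
        rw [← Finset.card_filter, ← Finset.card_filter]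
        exact Nat.add_le_add (le_of_eq (count_false_card w)) hend2

/-- For every binary word `w`, the optimal hexagonal-lattice fold score satisfies
`J_hex(w) ≤ Z(w)/2 + 1`, i.e. `2 J_hex(w) ≤ Z(w) + 2`. -/
theorem stmt6 (w : List Bool) : 2 * J hexAdj w ≤ w.count false + 2 := by
  have hb : J hexAdj w ≤ (w.count false + 2) / 2 := by
    rcases Set.eq_empty_or_nonempty {s | ∃ F, IsFold hexAdj w F ∧ score hexAdj w F = s} with h | h
    · rw [J, h, csSup_empty]
      exact Nat.zero_le _
    · rw [J]
      apply csSup_le h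
      rintro s ⟨F, hF, rfl⟩
      rw [Nat.le_div_iff_mul_le (by norm_num)]
      have := core w F hF
      omega
  omega
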